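/- Let K be a global function field with ring A of functions regular outside a fixed place ∞, and let D be an effective divisor supported away from ∞ with corresponding ideal 𝔡 ⊆ A. Then the map [(x_0,…,x_n)] ↦ [x_0 : ⋯ : x_n] is a bijection from {x ∈ (K^{n+1}\{0})/A^× : ht_∞(x) + deg D = r, 𝔇_0(x) = D} onto {x ∈ P^n(K) : ht(x) = r, [𝔇_0(x)] = [D]}. -/

import Mathlib

open scoped Classical

/-- `min_i v(x_i)`, the minimum of `v` over the nonzero coordinates of `x`
(convention `v(0) = ∞`; junk value `0` if `x = 0`). -/
noncomputable def minVal {K : Type} [Field K] {m : ℕ} (v : K → ℤ) (x : Fin m → K) : ℤ :=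
  (Finset.univ.inf fun i => if x i = 0 then (⊤ : WithTop ℤ) else (v (x i) : WithTop ℤ)).untopD 0

/-- The height `ht(x) = deg 𝔇_0(x) + ht_∞(x)` of `x ∈ K^{n+1} \ {0}`. -/
noncomputable def htGlobal {K : Type} [Field K] {n : ℕ} {V : Type}
    (val : V → K → ℤ) (deg : V → ℕ) (vinf : V) (x : Fin (n + 1) → K) : ℤ :=
  (∑ᶠ v ∈ {v : V | v ≠ vinf}, (deg v : ℤ) * minVal (val v) x)
    + (deg vinf : ℤ) * minVal (val vinf) x

section aux
variable {K : Type} [Field K] {m : ℕ}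

lemma suppNE {x : Fin m → K} (hx : x ≠ 0) :
    (Finset.univ.filter (fun i => x i ≠ 0)).Nonempty := by
  obtain ⟨i, hi⟩ := Function.ne_iff.1 hx
  exact ⟨i, by simpa using hi⟩

lemma minVal_eq_inf' (v : K → ℤ) {x : Fin m → K} (hx : x ≠ 0) :
    minVal v x = (Finset.univ.filter (fun i => x i ≠ 0)).inf' (suppNE hx)
      (fun i => v (x i)) := by
  set S := Finset.univ.filter (fun i => x i ≠ 0) with hS
  have h1 : (Finset.univ.inf fun i => if x i = 0 then (⊤ : WithTop ℤ)
      else (v (x i) : WithTop ℤ)) = S.inf fun i => if x i = 0 then (⊤ : WithTop ℤ)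
      else (v (x i) : WithTop ℤ) := by
    apply le_antisymm
    · exact Finset.inf_mono (Finset.subset_univ S)
    · apply Finset.le_inf
      intro i _
      by_cases h : x i = 0
      · simp [h]
      · exact Finset.inf_le (by simp [hS, h])
  have h2 : (S.inf fun i => if x i = 0 then (⊤ : WithTop ℤ)
      else (v (x i) : WithTop ℤ)) = S.inf fun i => ((v (x i) : WithTop ℤ)) := by
    apply Finset.inf_congr rfl
    intro i hi
    rw [hS, Finset.mem_filter] at hi
    simp [hi.2]
  rw [minVal, h1, h2,
    show (fun i => ((v (x i) : WithTop ℤ))) = ((↑) ∘ fun i => v (x i)) from rfl,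
    ← Finset.coe_inf' (suppNE hx)]
  rfl

lemma inf'_const_add {ι : Type*} (s : Finset ι) (hs : s.Nonempty) (c : ℤ) (f : ι → ℤ) :
    s.inf' hs (fun i => c + f i) = c + s.inf' hs f := by
  apply le_antisymm
  · obtain ⟨i, hi, hieq⟩ := Finset.exists_mem_eq_inf' hs f
    calc s.inf' hs (fun i => c + f i) ≤ c + f i := Finset.inf'_le _ hi
    _ = c + s.inf' hs f := by rw [hieq]
  · apply Finset.le_inf'
    intro i hi
    exact add_le_add (le_refl c) (Finset.inf'_le _ hi)

lemma minVal_smul (v : K → ℤ) (hv : ∀ a b : K, a ≠ 0 → b ≠ 0 → v (a * b) = v a + v b)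
    {c : K} (hc : c ≠ 0) {x : Fin m → K} (hx : x ≠ 0) :
    minVal v (c • x) = v c + minVal v x := by
  have hcx : c • x ≠ 0 := by
    simp [smul_eq_zero, hc, hx]
  rw [minVal_eq_inf' v hcx, minVal_eq_inf' v hx, ← inf'_const_add]
  have hfil : (Finset.univ.filter (fun i => (c • x) i ≠ 0)) =
      (Finset.univ.filter (fun i => x i ≠ 0)) := by
    apply Finset.filter_congr
    intro i _
    simp [Pi.smul_apply, smul_eq_mul, hc]
  rw [Finset.inf'_congr (suppNE hcx) hfil]
  intro i hi
  rw [Finset.mem_filter] at hi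
  have hxi : x i ≠ 0 := by
    intro h
    apply hi.2
    simp [h]
  simp only [Pi.smul_apply, smul_eq_mul]
  exact hv c (x i) hc hxi

end aux

section aux2
variable {K : Type} [Field K] {m : ℕ} {V : Type}

lemma minVal_support (val : V → K → ℤ)
    (hfin : ∀ a : K, a ≠ 0 → {v : V | val v a ≠ 0}.Finite)
    {x : Fin m → K} (hx : x ≠ 0) :
    {v : V | minVal (val v) x ≠ 0}.Finite := by
  set S := Finset.univ.filter (fun i => x i ≠ 0) with hSdef
  have hsub : {v : V | minVal (val v) x ≠ 0} ⊆
      ⋃ i ∈ (S : Set (Fin m)), {v : V | val v (x i) ≠ 0} := by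
    intro v hv
    by_contra hv'
    apply hv
    simp only [Set.mem_iUnion, Set.mem_setOf_eq, not_exists] at hv'
    have hz : ∀ i ∈ S, val v (x i) = 0 := by
      intro i hi
      by_contra h
      exact hv' i (Finset.mem_coe.2 hi) h
    rw [minVal_eq_inf' (val v) hx,
      Finset.inf'_congr (f := fun i => val v (x i)) (g := fun _ => (0:ℤ)) (suppNE hx) rfl hz]
    exact Finset.inf'_const _ 0
  exact Set.Finite.subset (Set.Finite.biUnion S.finite_toSet (fun i hi => by
    refine hfin (x i) ?_
    have := Finset.mem_coe.1 hi
    rw [hSdef, Finset.mem_filter] at this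
    exact this.2)) hsub

end aux2


section aux3
variable {K : Type} [Field K] {n : ℕ} {V : Type}

lemma finsum_split (vinf : V) (f : V → ℤ) (hf : (Function.support f).Finite) :
    (∑ᶠ v : V, f v) = (∑ᶠ v ∈ {v : V | v ≠ vinf}, f v) + f vinf := by
  have hset : (Set.univ : Set V) = {v : V | v ≠ vinf} ∪ {vinf} := by
    ext v
    by_cases h : v = vinf <;> simp [h]
  have hdisj : Disjoint {v : V | v ≠ vinf} ({vinf} : Set V) := by
    rw [Set.disjoint_singleton_right]
    simp
  rw [← finsum_mem_univ, hset,
    finsum_mem_union' hdisj (hf.inter_of_right _) (hf.inter_of_right _),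
    finsum_mem_singleton]

lemma ht_full (val : V → K → ℤ) (deg : V → ℕ) (vinf : V)
    (hfin : ∀ a : K, a ≠ 0 → {v : V | val v a ≠ 0}.Finite)
    {x : Fin (n + 1) → K} (hx : x ≠ 0) :
    htGlobal val deg vinf x = ∑ᶠ v : V, (deg v : ℤ) * minVal (val v) x := by
  have hsupp : (Function.support fun v => (deg v : ℤ) * minVal (val v) x).Finite := by
    apply (minVal_support val hfin hx).subset
    intro v hv
    simp only [Function.mem_support] at hv
    simp only [Set.mem_setOf_eq]
    intro h
    apply hv
    rw [h]; ring
  rw [finsum_split vinf _ hsupp]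
  rfl

lemma ht_smul (val : V → K → ℤ) (deg : V → ℕ) (vinf : V)
    (hmul : ∀ v, ∀ a b : K, a ≠ 0 → b ≠ 0 → val v (a * b) = val v a + val v b)
    (hfin : ∀ a : K, a ≠ 0 → {v : V | val v a ≠ 0}.Finite)
    (hprod : ∀ a : K, a ≠ 0 → (∑ᶠ v : V, (deg v : ℤ) * val v a) = 0)
    {c : K} (hc : c ≠ 0) {x : Fin (n + 1) → K} (hx : x ≠ 0) :
    htGlobal val deg vinf (c • x) = htGlobal val deg vinf x := by
  have hcx : c • x ≠ 0 := by simp [smul_eq_zero, hc, hx]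
  have hs1 : (Function.support fun v => (deg v : ℤ) * val v c).Finite := by
    apply (hfin c hc).subset
    intro v hv
    simp only [Function.mem_support] at hv
    simp only [Set.mem_setOf_eq]
    intro h
    apply hv
    rw [h]; ring
  have hs2 : (Function.support fun v => (deg v : ℤ) * minVal (val v) x).Finite := by
    apply (minVal_support val hfin hx).subset
    intro v hv
    simp only [Function.mem_support] at hv
    simp only [Set.mem_setOf_eq]
    intro h
    apply hv
    rw [h]; ring
  rw [ht_full val deg vinf hfin hcx, ht_full val deg vinf hfin hx]
  have heq : ∀ v : V, (deg v : ℤ) * minVal (val v) (c • x)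
      = (deg v : ℤ) * val v c + (deg v : ℤ) * minVal (val v) x := by
    intro v
    rw [minVal_smul (val v) (hmul v) hc hx, mul_add]
  calc (∑ᶠ v : V, (deg v : ℤ) * minVal (val v) (c • x))
      = ∑ᶠ v : V, ((deg v : ℤ) * val v c + (deg v : ℤ) * minVal (val v) x) := by
        exact finsum_congr heq
    _ = (∑ᶠ v : V, (deg v : ℤ) * val v c) + ∑ᶠ v : V, (deg v : ℤ) * minVal (val v) x := by
        exact finsum_add_distrib hs1 hs2
    _ = ∑ᶠ v : V, (deg v : ℤ) * minVal (val v) x := by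
        rw [hprod c hc, zero_add]

end aux3


/-- Let `K` be a global function field (places indexed by `V`, with `ℤ`-valued
valuations `val v`, degrees `deg v`, distinguished place `vinf` of degree `d_∞`), let
`A ⊂ K` be the ring of functions regular outside `∞`, and let `D` be an effective
divisor supported away from `∞` (corresponding to an ideal `𝔡 ⊆ A`).  Then the map
`[(x_0,…,x_n)] ↦ [x_0 : ⋯ : x_n]` is a bijection from
`{x ∈ (K^{n+1}\{0})/A^× : ht_∞(x) + deg D = r, 𝔇_0(x) = D}` onto
`{x ∈ ℙⁿ(K) : ht(x) = r, [𝔇_0(x)] = [D]}`, where `[𝔇_0(x)] = [D]` in `Pic(A)` means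
that the divisors `𝔇_0(x)` and `D` differ by the divisor of some `λ ∈ K^×`. -/
theorem stmt_17 (K : Type) [Field K] (n : ℕ) (V : Type)
    (val : V → K → ℤ) (deg : V → ℕ) (vinf : V)
    (hdeg : ∀ v, 1 ≤ deg v)
    (hmul : ∀ v, ∀ a b : K, a ≠ 0 → b ≠ 0 → val v (a * b) = val v a + val v b)
    (hfin : ∀ a : K, a ≠ 0 → {v : V | val v a ≠ 0}.Finite)
    (hprod : ∀ a : K, a ≠ 0 → (∑ᶠ v : V, (deg v : ℤ) * val v a) = 0)
    -- `A` is the ring of functions regular away from `∞`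
    (A : Subring K)
    (hA : ∀ a : K, a ∈ A ↔ (a = 0 ∨ (a ≠ 0 ∧ ∀ v : V, v ≠ vinf → 0 ≤ val v a)))
    -- `D` is an effective divisor supported away from `∞`
    (D : V → ℤ) (hDfin : {v : V | D v ≠ 0}.Finite) (hDeff : ∀ v, 0 ≤ D v)
    (hDinf : D vinf = 0)
    (r : ℤ) :
    ∃ e : Quot (fun x y : {x : Fin (n + 1) → K // x ≠ 0 ∧
          (deg vinf : ℤ) * minVal (val vinf) x + (∑ᶠ v : V, (deg v : ℤ) * D v) = r ∧
          ∀ v : V, v ≠ vinf → minVal (val v) x = D v} =>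
        -- `x ~ y` iff `x = u • y` for a unit `u ∈ A^×`
        ∃ u w : K, u ∈ A ∧ w ∈ A ∧ u * w = 1 ∧ u • y.1 = x.1) ≃
      {p : Projectivization K (Fin (n + 1) → K) //
        htGlobal val deg vinf p.rep = r ∧
        ∃ lam : K, lam ≠ 0 ∧ ∀ v : V, v ≠ vinf →
          minVal (val v) p.rep = D v + val v lam},
      ∀ x, (e (Quot.mk _ x) : Projectivization K (Fin (n + 1) → K))
        = Projectivization.mk K x.1 x.2.1 := by
  classical
  -- basic valuation facts
  have hval1 : ∀ v : V, val v (1 : K) = 0 := by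
    intro v
    have h := hmul v 1 1 one_ne_zero one_ne_zero
    rw [mul_one] at h
    omega
  have hvalinv : ∀ (v : V) (a : K), a ≠ 0 → val v a⁻¹ = -val v a := by
    intro v a ha
    have h := hmul v a a⁻¹ ha (inv_ne_zero ha)
    rw [mul_inv_cancel₀ ha, hval1 v] at h
    omega
  have hDsupp : (Function.support fun v => (deg v : ℤ) * D v).Finite := by
    apply hDfin.subset
    intro v hv
    simp only [Function.mem_support] at hv
    simp only [Set.mem_setOf_eq]
    intro h
    apply hv
    rw [h]; ring
  -- height of an element with finite divisor `D`
  have hhtT : ∀ y : Fin (n + 1) → K, y ≠ 0 →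
      (∀ v : V, v ≠ vinf → minVal (val v) y = D v) →
      htGlobal val deg vinf y
        = (deg vinf : ℤ) * minVal (val vinf) y + (∑ᶠ v : V, (deg v : ℤ) * D v) := by
    intro y hy hDv
    have h1 : (∑ᶠ v ∈ {v : V | v ≠ vinf}, (deg v : ℤ) * minVal (val v) y)
        = ∑ᶠ v ∈ {v : V | v ≠ vinf}, (deg v : ℤ) * D v :=
      finsum_mem_congr rfl (fun v hv => by rw [hDv v hv])
    have h2 : (∑ᶠ v : V, (deg v : ℤ) * D v)
        = (∑ᶠ v ∈ {v : V | v ≠ vinf}, (deg v : ℤ) * D v) + (deg vinf : ℤ) * D vinf :=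
      finsum_split vinf _ hDsupp
    rw [hDinf, mul_zero, add_zero] at h2
    rw [htGlobal, h1, ← h2, add_comm]
  -- the projective point attached to a good vector is good
  have hFmem : ∀ (y : Fin (n + 1) → K) (hy : y ≠ 0),
      ((deg vinf : ℤ) * minVal (val vinf) y + (∑ᶠ v : V, (deg v : ℤ) * D v) = r) →
      (∀ v : V, v ≠ vinf → minVal (val v) y = D v) →
      htGlobal val deg vinf (Projectivization.mk K y hy).rep = r ∧
      ∃ lam : K, lam ≠ 0 ∧ ∀ v : V, v ≠ vinf →
        minVal (val v) (Projectivization.mk K y hy).rep = D v + val v lam := by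
    intro y hy hht hDv
    obtain ⟨a, ha⟩ := Projectivization.exists_smul_eq_mk_rep K y hy
    have ha' : (a : K) • y = (Projectivization.mk K y hy).rep := ha
    have ha0 : (a : K) ≠ 0 := a.ne_zero
    constructor
    · rw [← ha', ht_smul val deg vinf hmul hfin hprod ha0 hy, hhtT y hy hDv, hht]
    · refine ⟨(a : K), ha0, fun v hv => ?_⟩
      rw [← ha', minVal_smul (val v) (hmul v) ha0 hy, hDv v hv, add_comm]
  let F : {x : Fin (n + 1) → K // x ≠ 0 ∧
        (deg vinf : ℤ) * minVal (val vinf) x + (∑ᶠ v : V, (deg v : ℤ) * D v) = r ∧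
        ∀ v : V, v ≠ vinf → minVal (val v) x = D v} →
      {p : Projectivization K (Fin (n + 1) → K) //
        htGlobal val deg vinf p.rep = r ∧
        ∃ lam : K, lam ≠ 0 ∧ ∀ v : V, v ≠ vinf →
          minVal (val v) p.rep = D v + val v lam} :=
    fun x => ⟨Projectivization.mk K x.1 x.2.1, hFmem x.1 x.2.1 x.2.2.1 x.2.2.2⟩
  have hresp : ∀ x y, (∃ u w : K, u ∈ A ∧ w ∈ A ∧ u * w = 1 ∧ u • y.1 = x.1) →
      F x = F y := by
    rintro x y ⟨u, w, hu, hw, huw, hxy⟩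
    have hu0 : u ≠ 0 := by
      intro h
      rw [h, zero_mul] at huw
      exact zero_ne_one huw
    apply Subtype.ext
    show Projectivization.mk K x.1 x.2.1 = Projectivization.mk K y.1 y.2.1
    rw [Projectivization.mk_eq_mk_iff]
    exact ⟨Units.mk0 u hu0, hxy⟩
  have hinj : Function.Injective (Quot.lift F hresp) := by
    intro q1 q2
    refine Quot.induction_on₂ q1 q2 ?_
    intro x y h
    have h' : Projectivization.mk K x.1 x.2.1 = Projectivization.mk K y.1 y.2.1 :=
      congrArg Subtype.val h
    rw [Projectivization.mk_eq_mk_iff] at h'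
    obtain ⟨a, ha⟩ := h'
    have ha' : (a : K) • y.1 = x.1 := ha
    have ha0 : (a : K) ≠ 0 := a.ne_zero
    have hv0 : ∀ v : V, v ≠ vinf → val v (a : K) = 0 := by
      intro v hv
      have h1 := minVal_smul (val v) (hmul v) ha0 y.2.1
      rw [ha', x.2.2.2 v hv, y.2.2.2 v hv] at h1
      omega
    apply Quot.sound
    refine ⟨(a : K), (a : K)⁻¹, ?_, ?_, mul_inv_cancel₀ ha0, ha'⟩
    · rw [hA]
      exact Or.inr ⟨ha0, fun v hv => le_of_eq (hv0 v hv).symm⟩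
    · rw [hA]
      refine Or.inr ⟨inv_ne_zero ha0, fun v hv => ?_⟩
      rw [hvalinv v _ ha0, hv0 v hv]
      omega
  have hsurj : Function.Surjective (Quot.lift F hresp) := by
    rintro ⟨p, hht, lam, hlam, hminv⟩
    have hrep0 : p.rep ≠ 0 := p.rep_nonzero
    have hl0 : lam⁻¹ ≠ 0 := inv_ne_zero hlam
    set y : Fin (n + 1) → K := lam⁻¹ • p.rep with hy_def
    have hy : y ≠ 0 := by simp [hy_def, smul_eq_zero, hl0, hrep0]
    have hmin : ∀ v : V, v ≠ vinf → minVal (val v) y = D v := by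
      intro v hv
      rw [hy_def, minVal_smul (val v) (hmul v) hl0 hrep0, hminv v hv, hvalinv v lam hlam]
      ring
    have hhty : htGlobal val deg vinf y = r := by
      rw [hy_def, ht_smul val deg vinf hmul hfin hprod hl0 hrep0]
      exact hht
    have hht' : (deg vinf : ℤ) * minVal (val vinf) y
        + (∑ᶠ v : V, (deg v : ℤ) * D v) = r := by
      rw [← hhtT y hy hmin]
      exact hhty
    refine ⟨Quot.mk _ ⟨y, hy, hht', hmin⟩, ?_⟩
    apply Subtype.ext
    show Projectivization.mk K y hy = p
    have : Projectivization.mk K y hy = Projectivization.mk K p.rep hrep0 := by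
      rw [Projectivization.mk_eq_mk_iff]
      exact ⟨Units.mk0 lam⁻¹ hl0, rfl⟩
    rw [this, Projectivization.mk_rep]
  refine ⟨Equiv.ofBijective (Quot.lift F hresp) ⟨hinj, hsurj⟩, fun x => ?_⟩
  rfl
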